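/- Let V be a normed vector space. The only conical geodesic bicombing on V (with A = V) is the linear one: if σ : V × V × [0,1] → V is a conical geodesic bicombing and the closed unit ball of V is the closed convex hull of its extreme points, then σ(p,q,t) = (1−t)p + tq for all p, q ∈ V, t ∈ [0,1]. -/

import Mathlib

open MeasureTheory Filter Set
open scoped NNReal Topology

/-- A convex function on ℝ with derivative zero at a point attains its minimum there. -/
lemma convexOn_isMin_of_deriv_zero {f : ℝ → ℝ} (hf : ConvexOn ℝ Set.univ f)
    {a : ℝ} (hd : HasDerivAt f 0 a) (y : ℝ) : f a ≤ f y := by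
  rcases lt_trichotomy y a with hy | rfl | hy
  · have hslope : Tendsto (slope f a) (𝓝[<] a) (𝓝 0) :=
      (hasDerivAt_iff_tendsto_slope.1 hd).mono_left
        (nhdsWithin_mono a (fun z hz => ne_of_lt hz))
    have hev : ∀ᶠ z in 𝓝[<] a, slope f a y ≤ slope f a z := by
      filter_upwards [Ioo_mem_nhdsLT_of_mem (Set.mem_Ioc.mpr ⟨hy, le_refl a⟩)] with z hz
      have := hf.secant_mono (Set.mem_univ a) (Set.mem_univ y) (Set.mem_univ z)
        (ne_of_lt hy) (ne_of_lt hz.2) (le_of_lt hz.1)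
      simpa [slope_def_field] using this
    have h0 : slope f a y ≤ 0 := ge_of_tendsto hslope hev
    rw [slope_def_field] at h0
    have hya : y - a < 0 := by linarith
    nlinarith [div_mul_cancel₀ (f y - f a) (ne_of_lt hya),
      mul_le_mul_of_nonpos_right h0 (le_of_lt hya)]
  · exact le_refl _
  · have hslope : Tendsto (slope f a) (𝓝[>] a) (𝓝 0) :=
      (hasDerivAt_iff_tendsto_slope.1 hd).mono_left
        (nhdsWithin_mono a (fun z hz => ne_of_gt hz))
    have hev : ∀ᶠ z in 𝓝[>] a, slope f a z ≤ slope f a y := by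
      filter_upwards [Ioo_mem_nhdsGT_of_mem (Set.mem_Ico.mpr ⟨le_refl a, hy⟩)] with z hz
      have := hf.secant_mono (Set.mem_univ a) (Set.mem_univ z) (Set.mem_univ y)
        (ne_of_gt hz.1) (ne_of_gt hy) (le_of_lt hz.2)
      simpa [slope_def_field] using this
    have h0 : 0 ≤ slope f a y := le_of_tendsto hslope hev
    rw [slope_def_field] at h0
    have hya : 0 < y - a := by linarith
    nlinarith [div_mul_cancel₀ (f y - f a) (ne_of_gt hya),
      mul_le_mul_of_nonneg_right h0 (le_of_lt hya)]

/-- A co-null set of reals contains arbitrarily large elements. -/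
lemma exists_gt_of_ae {S : Set ℝ} (hS : ∀ᵐ s : ℝ, s ∈ S) (M : ℝ) : ∃ s ∈ S, M < s := by
  by_contra hc
  push_neg at hc
  have h1 : Set.Ioi M ⊆ Sᶜ := fun x hx hxS => absurd (hc x hxS) (not_le.mpr hx)
  have h2 : volume (Set.Ioi M) = 0 := measure_mono_null h1 (ae_iff.mp hS)
  rw [Real.volume_Ioi] at h2
  exact ENNReal.top_ne_zero h2

/-- Key lemma: in a normed space, if `‖x‖ ≤ (1-t)‖x + εu‖ + t‖x + εv‖` for all `x` and `ε`,
with `0 < t < 1`, then `(1-t)u + tv = 0`. -/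
lemma key_bicombing {V : Type*} [NormedAddCommGroup V] [NormedSpace ℝ V]
    {t : ℝ} (ht0 : 0 < t) (ht1 : t < 1) (u v : V)
    (H : ∀ (x : V) (ε : ℝ), ‖x‖ ≤ (1 - t) * ‖x + ε • u‖ + t * ‖x + ε • v‖) :
    (1 - t) • u + t • v = 0 := by
  by_contra hd0
  set d : V := (1 - t) • u + t • v with hd
  clear_value d
  have hdnorm : 0 < ‖d‖ := norm_pos_iff.mpr hd0
  set M : ℝ × ℝ → ℝ := fun p => ‖p.1 • u + p.2 • d‖ with hMdef
  -- M is Lipschitz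
  have lip : LipschitzWith (‖u‖₊ + ‖d‖₊) M := by
    apply LipschitzWith.of_dist_le_mul
    intro p q
    have h1 : dist (M p) (M q) ≤ ‖(p.1 - q.1) • u + (p.2 - q.2) • d‖ := by
      rw [Real.dist_eq]
      calc |M p - M q| ≤ ‖(p.1 • u + p.2 • d) - (q.1 • u + q.2 • d)‖ := abs_norm_sub_norm_le _ _
        _ = _ := by rw [show (p.1 • u + p.2 • d) - (q.1 • u + q.2 • d)
              = (p.1 - q.1) • u + (p.2 - q.2) • d by module]
    have h2 : ‖(p.1 - q.1) • u + (p.2 - q.2) • d‖ ≤ |p.1 - q.1| * ‖u‖ + |p.2 - q.2| * ‖d‖ := by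
      calc ‖(p.1 - q.1) • u + (p.2 - q.2) • d‖ ≤ ‖(p.1 - q.1) • u‖ + ‖(p.2 - q.2) • d‖ :=
            norm_add_le _ _
        _ = |p.1 - q.1| * ‖u‖ + |p.2 - q.2| * ‖d‖ := by
            rw [norm_smul, norm_smul, Real.norm_eq_abs, Real.norm_eq_abs]
    have h3 : |p.1 - q.1| ≤ dist p q := by
      rw [← Real.dist_eq]; exact le_max_left _ _
    have h4 : |p.2 - q.2| ≤ dist p q := by
      rw [← Real.dist_eq]; exact le_max_right _ _
    have hcoe : ((‖u‖₊ + ‖d‖₊ : ℝ≥0) : ℝ) = ‖u‖ + ‖d‖ := by push_cast; rfl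
    rw [hcoe]
    calc dist (M p) (M q) ≤ |p.1 - q.1| * ‖u‖ + |p.2 - q.2| * ‖d‖ := le_trans h1 h2
      _ ≤ dist p q * ‖u‖ + dist p q * ‖d‖ := by gcongr <;> positivity
      _ = (‖u‖ + ‖d‖) * dist p q := by ring
  -- Rademacher + Fubini
  have hae : ∀ᵐ p : ℝ × ℝ, DifferentiableAt ℝ M p := lip.ae_differentiableAt
  rw [Measure.volume_eq_prod] at hae
  obtain ⟨c₀, hc₀⟩ := (Measure.ae_ae_of_ae_prod hae).exists
  -- derivative vanishes in the d-direction at every differentiability point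
  have key : ∀ c s : ℝ, DifferentiableAt ℝ M (c, s) → HasDerivAt (fun r => M (c, r)) 0 s := by
    intro c s hdiff
    have hG := hdiff.hasFDerivAt
    set G := fderiv ℝ M (c, s) with hGdef
    have htne : t ≠ 0 := ne_of_gt ht0
    have line1 : HasDerivAt (fun ε : ℝ => ((c + ε, s) : ℝ × ℝ)) (1, 0) 0 := by
      have ha : HasDerivAt (fun ε : ℝ => c + ε) 1 0 := by
        simpa using (hasDerivAt_id (0:ℝ)).const_add c
      exact ha.prodMk (hasDerivAt_const _ _)
    have line2 : HasDerivAt (fun ε : ℝ => ((c - ε * ((1 - t)/t), s + ε * (1/t)) : ℝ × ℝ))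
        (-((1 - t)/t), 1/t) 0 := by
      have ha : HasDerivAt (fun ε : ℝ => c - ε * ((1 - t)/t)) (-((1 - t)/t)) 0 := by
        simpa using ((hasDerivAt_id (0:ℝ)).mul_const ((1 - t)/t)).const_sub c
      have hb : HasDerivAt (fun ε : ℝ => s + ε * (1/t)) (1/t) 0 := by
        simpa using ((hasDerivAt_id (0:ℝ)).mul_const (1/t)).const_add s
      exact ha.prodMk hb
    have hG1 : HasFDerivAt M G ((fun ε : ℝ => ((c + ε, s) : ℝ × ℝ)) 0) := by simpa using hG
    have comp1 : HasDerivAt (fun ε : ℝ => M (c + ε, s)) (G (1, 0)) 0 :=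
      (hG1.comp_hasDerivAt 0 line1 :)
    have hG2 : HasFDerivAt M G
        ((fun ε : ℝ => ((c - ε * ((1 - t)/t), s + ε * (1/t)) : ℝ × ℝ)) 0) := by simpa using hG
    have comp2 : HasDerivAt (fun ε : ℝ => M (c - ε * ((1 - t)/t), s + ε * (1/t)))
        (G (-((1 - t)/t), 1/t)) 0 := (hG2.comp_hasDerivAt 0 line2 :)
    have hh : HasDerivAt (fun ε : ℝ => (1 - t) * M (c + ε, s)
        + t * M (c - ε * ((1 - t)/t), s + ε * (1/t)) - M (c, s))
        ((1 - t) * G (1, 0) + t * G (-((1 - t)/t), 1/t)) 0 :=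
      ((comp1.const_mul (1 - t)).add (comp2.const_mul t)).sub_const _
    have hnn : ∀ ε : ℝ, 0 ≤ (1 - t) * M (c + ε, s)
        + t * M (c - ε * ((1 - t)/t), s + ε * (1/t)) - M (c, s) := by
      intro ε
      have hx := H (c • u + s • d) ε
      have e1 : M (c + ε, s) = ‖(c • u + s • d) + ε • u‖ := by
        rw [hMdef]
        show ‖(c + ε) • u + s • d‖ = ‖(c • u + s • d) + ε • u‖
        rw [show (c + ε) • u + s • d = (c • u + s • d) + ε • u by module]
      have e2 : M (c - ε * ((1 - t)/t), s + ε * (1/t)) = ‖(c • u + s • d) + ε • v‖ := by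
        rw [hMdef]
        show ‖(c - ε * ((1 - t)/t)) • u + (s + ε * (1/t)) • d‖ = ‖(c • u + s • d) + ε • v‖
        rw [show (c - ε * ((1 - t)/t)) • u + (s + ε * (1/t)) • d = (c • u + s • d) + ε • v by
          rw [hd]; match_scalars <;> field_simp <;> ring]
      have e3 : M (c, s) = ‖c • u + s • d‖ := by rw [hMdef]
      rw [e1, e2, e3]; linarith
    have hmin : IsLocalMin (fun ε : ℝ => (1 - t) * M (c + ε, s)
        + t * M (c - ε * ((1 - t)/t), s + ε * (1/t)) - M (c, s)) 0 := by
      refine Filter.Eventually.of_forall (fun ε => ?_)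
      show (1 - t) * M (c + 0, s) + t * M (c - 0 * ((1 - t)/t), s + 0 * (1/t)) - M (c, s)
          ≤ (1 - t) * M (c + ε, s) + t * M (c - ε * ((1 - t)/t), s + ε * (1/t)) - M (c, s)
      rw [show c + 0 = c by ring, show c - 0 * ((1 - t)/t) = c by ring,
        show s + 0 * (1/t) = s by ring]
      have := hnn ε
      linarith
    have hkey : (1 - t) * G (1, 0) + t * G (-((1 - t)/t), 1/t) = 0 :=
      hmin.hasDerivAt_eq_zero hh
    have hG01 : G (0, 1) = 0 := by
      have hcomb : ((0:ℝ), (1:ℝ))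
          = (1 - t) • ((1:ℝ), (0:ℝ)) + t • ((-((1 - t)/t), 1/t) : ℝ × ℝ) := by
        rw [Prod.ext_iff]
        constructor
        · show (0:ℝ) = (1 - t) * 1 + t * (-((1 - t)/t))
          field_simp
          ring
        · show (1:ℝ) = (1 - t) * 0 + t * (1/t)
          field_simp
          ring
      rw [hcomb, G.map_add, G.map_smul, G.map_smul]
      simpa using hkey
    have inner : HasDerivAt (fun r : ℝ => ((c, r) : ℝ × ℝ)) (0, 1) s :=
      (hasDerivAt_const _ _).prodMk (hasDerivAt_id _)
    have hG3 : HasFDerivAt M G ((fun r : ℝ => ((c, r) : ℝ × ℝ)) s) := by simpa using hG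
    have final := hG3.comp_hasDerivAt s inner
    rw [hG01] at final
    exact final
  -- the function ψ(s) = M(c₀, s) is convex
  have hconv : ConvexOn ℝ Set.univ (fun s : ℝ => M (c₀, s)) := by
    constructor
    · exact convex_univ
    · intro x _ y _ a b ha hb hab
      show ‖c₀ • u + (a * x + b * y) • d‖ ≤ a * ‖c₀ • u + x • d‖ + b * ‖c₀ • u + y • d‖
      have hvec : c₀ • u + (a * x + b * y) • d
          = a • (c₀ • u + x • d) + b • (c₀ • u + y • d) := by
        match_scalars
        · linear_combination (-c₀) * hab
        · ring
      rw [hvec]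
      calc ‖a • (c₀ • u + x • d) + b • (c₀ • u + y • d)‖
          ≤ ‖a • (c₀ • u + x • d)‖ + ‖b • (c₀ • u + y • d)‖ := norm_add_le _ _
        _ = a * ‖c₀ • u + x • d‖ + b * ‖c₀ • u + y • d‖ := by
            rw [norm_smul, norm_smul, Real.norm_eq_abs, Real.norm_eq_abs,
              abs_of_nonneg ha, abs_of_nonneg hb]
  -- pick two good points and derive a contradiction
  obtain ⟨s₁, hs₁⟩ := hc₀.exists
  have hmin₁ := convexOn_isMin_of_deriv_zero hconv (key c₀ s₁ hs₁)
  obtain ⟨s₂, hs₂d, hs₂gt⟩ := exists_gt_of_ae hc₀ ((M (c₀, s₁) + ‖c₀ • u‖) / ‖d‖)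
  have hmin₂ := convexOn_isMin_of_deriv_zero hconv (key c₀ s₂ hs₂d)
  have hle : M (c₀, s₂) ≤ M (c₀, s₁) := hmin₂ s₁
  have hlower : s₂ * ‖d‖ - ‖c₀ • u‖ ≤ M (c₀, s₂) := by
    have : ‖s₂ • d‖ ≤ ‖c₀ • u + s₂ • d‖ + ‖c₀ • u‖ := by
      calc ‖s₂ • d‖ = ‖(c₀ • u + s₂ • d) - c₀ • u‖ := by rw [show (c₀ • u + s₂ • d) - c₀ • u
            = s₂ • d by module]
        _ ≤ ‖c₀ • u + s₂ • d‖ + ‖c₀ • u‖ := norm_sub_le _ _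
    have hs2 : ‖s₂ • d‖ = |s₂| * ‖d‖ := by rw [norm_smul, Real.norm_eq_abs]
    have : |s₂| * ‖d‖ - ‖c₀ • u‖ ≤ M (c₀, s₂) := by
      rw [hMdef]; dsimp only; linarith [this, hs2.symm.le]
    calc s₂ * ‖d‖ - ‖c₀ • u‖ ≤ |s₂| * ‖d‖ - ‖c₀ • u‖ := by
          have : s₂ ≤ |s₂| := le_abs_self s₂
          nlinarith
      _ ≤ M (c₀, s₂) := this
  have hbig : M (c₀, s₁) + ‖c₀ • u‖ < s₂ * ‖d‖ := by
    rw [div_lt_iff₀ hdnorm] at hs₂gt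
    linarith
  linarith

/-- The only conical geodesic bicombing on a normed vector space whose closed
unit ball is the closed convex hull of its extreme points is the linear one. -/
theorem bicombing_linear_on_whole_space
    {V : Type*} [NormedAddCommGroup V] [NormedSpace ℝ V]
    (hV : Metric.closedBall (0:V) 1 =
      closure (convexHull ℝ (Set.extremePoints ℝ (Metric.closedBall (0:V) 1))))
    (σ : V → V → ℝ → V)
    (h0 : ∀ p q, σ p q 0 = p)
    (h1 : ∀ p q, σ p q 1 = q)
    (hgeo : ∀ p q, ∀ s ∈ Set.Icc (0:ℝ) 1, ∀ t ∈ Set.Icc (0:ℝ) 1,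
      ‖σ p q s - σ p q t‖ = |s - t| * ‖p - q‖)
    (hcon : ∀ p q p' q', ∀ t ∈ Set.Icc (0:ℝ) 1,
      ‖σ p q t - σ p' q' t‖ ≤ (1 - t) * ‖p - p'‖ + t * ‖q - q'‖) :
    ∀ p q : V, ∀ t ∈ Set.Icc (0:ℝ) 1, σ p q t = (1 - t) • p + t • q := by
  intro p q t ht
  obtain ⟨ht0, ht1⟩ := ht
  rcases eq_or_lt_of_le ht0 with h0t | h0t
  · rw [← h0t, h0 p q]
    norm_num
  rcases eq_or_lt_of_le ht1 with h1t | h1t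
  · rw [h1t, h1 p q]
    norm_num
  -- 0 < t < 1
  have htIcc : t ∈ Set.Icc (0:ℝ) 1 := ⟨ht0, ht1⟩
  have hσaa : ∀ a : V, σ a a t = a := by
    intro a
    have h := hgeo a a t htIcc 0 ⟨le_refl 0, zero_le_one⟩
    rw [h0 a a, sub_self, norm_zero, mul_zero] at h
    rw [← sub_eq_zero, ← norm_eq_zero]
    exact h
  have hball : ∀ a : V, ‖σ p q t - a‖ ≤ (1 - t) * ‖p - a‖ + t * ‖q - a‖ := by
    intro a
    have h := hcon p q a a t htIcc
    rw [hσaa a] at h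
    exact h
  set z : V := σ p q t - p with hz
  set w : V := q - p with hw
  have H : ∀ (x : V) (ε : ℝ), ‖x‖ ≤ (1 - t) * ‖x + ε • z‖ + t * ‖x + ε • (z - w)‖ := by
    intro x ε
    rcases eq_or_ne ε 0 with rfl | hε
    · simp only [zero_smul, add_zero]
      linarith
    · have h := hball (p + z + ε⁻¹ • x)
      have e0 : σ p q t - (p + z + ε⁻¹ • x) = -(ε⁻¹ • x) := by
        rw [hz]; module
      have e1 : p - (p + z + ε⁻¹ • x) = -(z + ε⁻¹ • x) := by module
      have e2 : q - (p + z + ε⁻¹ • x) = -((z - w) + ε⁻¹ • x) := by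
        rw [hw]; module
      rw [e0, e1, e2, norm_neg, norm_neg, norm_neg] at h
      have habs : 0 < |ε| := abs_pos.mpr hε
      have hmul := mul_le_mul_of_nonneg_left h (le_of_lt habs)
      have f0 : |ε| * ‖ε⁻¹ • x‖ = ‖x‖ := by
        rw [norm_smul, Real.norm_eq_abs, abs_inv]
        field_simp
      have f1 : |ε| * ‖z + ε⁻¹ • x‖ = ‖x + ε • z‖ := by
        rw [show |ε| = ‖ε‖ from rfl, ← norm_smul, smul_add, smul_inv_smul₀ hε, add_comm]
      have f2 : |ε| * ‖(z - w) + ε⁻¹ • x‖ = ‖x + ε • (z - w)‖ := by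
        rw [show |ε| = ‖ε‖ from rfl, ← norm_smul, smul_add, smul_inv_smul₀ hε, add_comm]
      rw [mul_add, ← mul_assoc, ← mul_assoc, mul_comm (|ε|) (1 - t), mul_comm (|ε|) t,
        mul_assoc, mul_assoc, f0, f1, f2] at hmul
      exact hmul
  have hkey := key_bicombing h0t h1t z (z - w) H
  -- (1-t) • z + t • (z - w) = 0  ⇒  σ p q t = (1-t) • p + t • q
  have : σ p q t - ((1 - t) • p + t • q) = (1 - t) • z + t • (z - w) := by
    rw [hz, hw]; module
  rw [hkey] at this
  rw [← sub_eq_zero]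
  exact this
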